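/- Let C be a cocommutative coalgebra, X a symmetric C-bicomodule, and ω : X → C⊗C a symmetric normalized 2-cocycle. Then C̃ := C ⊕ X with comultiplication Δ_{C̃}(c,x) = Σ(c₍₁₎,0)⊗(c₍₂₎,0) + Σ(x₍−1₎,0)⊗(0,x₍0₎) + Σ(0,x₍0₎)⊗(x₍1₎,0) + Σ(ω₁(x),0)⊗(ω₂(x),0) and counit ε(c,x) = ε_C(c) is a coassociative counital cocommutative coalgebra. -/
import Mathlib


open TensorProduct

section
variable {k : Type*} [Field k] {C X : Type*}
  [AddCommGroup C] [Module k C] [Coalgebra k C]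
  [AddCommGroup X] [Module k X]

/-- The comultiplication on `C̃ = C ⊕ X` built from the comultiplication of `C`, a
(symmetric) coaction `ρ` on `X` and a 2-cocycle `ω : X → C ⊗ C`. -/
noncomputable def extComul (ρ : X →ₗ[k] X ⊗[k] C) (ω : X →ₗ[k] C ⊗[k] C) :
    (C × X) →ₗ[k] (C × X) ⊗[k] (C × X) :=
  TensorProduct.map (LinearMap.inl k C X) (LinearMap.inl k C X) ∘ₗ
      (Coalgebra.comul : C →ₗ[k] C ⊗[k] C) ∘ₗ LinearMap.fst k C X
    + TensorProduct.map (LinearMap.inl k C X) (LinearMap.inr k C X) ∘ₗ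
      ((TensorProduct.comm k X C).toLinearMap ∘ₗ ρ) ∘ₗ LinearMap.snd k C X
    + TensorProduct.map (LinearMap.inr k C X) (LinearMap.inl k C X) ∘ₗ
      ρ ∘ₗ LinearMap.snd k C X
    + TensorProduct.map (LinearMap.inl k C X) (LinearMap.inl k C X) ∘ₗ
      ω ∘ₗ LinearMap.snd k C X

/-- The counit on `C̃ = C ⊕ X`. -/
noncomputable def extCounit : (C × X) →ₗ[k] k :=
  (Coalgebra.counit : C →ₗ[k] k) ∘ₗ LinearMap.fst k C X

end

section Aux
open LinearMap
variable {k : Type*} [CommRing k] {M N P Q : Type*}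
  [AddCommGroup M] [Module k M] [AddCommGroup N] [Module k N]
  [AddCommGroup P] [Module k P] [AddCommGroup Q] [Module k Q]

lemma aux_n1 (f : N →ₗ[k] P ⊗[k] Q) :
    (TensorProduct.assoc k P Q M).toLinearMap ∘ₗ rTensor M f ∘ₗ
        (TensorProduct.comm k M N).toLinearMap
      = (TensorProduct.assoc k P Q M).toLinearMap ∘ₗ
          (TensorProduct.comm k M (P ⊗[k] Q)).toLinearMap ∘ₗ lTensor M f := by
  apply TensorProduct.ext'; intro m n; simp

lemma aux_n2 (g : M →ₗ[k] P) :
    lTensor N g ∘ₗ (TensorProduct.comm k M N).toLinearMap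
      = (TensorProduct.comm k P N).toLinearMap ∘ₗ rTensor N g := by
  apply TensorProduct.ext'; intro m n; simp

lemma aux_n3 :
    (TensorProduct.assoc k N N M).toLinearMap ∘ₗ (TensorProduct.comm k M (N ⊗[k] N)).toLinearMap
        ∘ₗ lTensor M (TensorProduct.comm k N N).toLinearMap
      = lTensor N (TensorProduct.comm k M N).toLinearMap
          ∘ₗ (TensorProduct.comm k (M ⊗[k] N) N).toLinearMap
          ∘ₗ (TensorProduct.assoc k M N N).symm.toLinearMap := by
  apply TensorProduct.ext'; intro m u
  induction u using TensorProduct.induction_on with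
  | zero => simp
  | tmul a b => simp
  | add u v hu hv => simp only [tmul_add, map_add, hu, hv]

lemma aux_n4 :
    (TensorProduct.assoc k N M N).toLinearMap ∘ₗ rTensor N (TensorProduct.comm k M N).toLinearMap
        ∘ₗ (TensorProduct.assoc k M N N).symm.toLinearMap
        ∘ₗ lTensor M (TensorProduct.comm k N N).toLinearMap
      = (TensorProduct.comm k (M ⊗[k] N) N).toLinearMap
          ∘ₗ (TensorProduct.assoc k M N N).symm.toLinearMap := by
  apply TensorProduct.ext'; intro m u
  induction u using TensorProduct.induction_on with
  | zero => simp
  | tmul a b => simp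
  | add u v hu hv => simp only [tmul_add, map_add, hu, hv]

lemma aux_c1 (f : M →ₗ[k] k) (g : N →ₗ[k] P) :
    (TensorProduct.lid k P).toLinearMap ∘ₗ TensorProduct.map f g
      = g ∘ₗ (TensorProduct.lid k N).toLinearMap ∘ₗ rTensor N f := by
  apply TensorProduct.ext'; intro m n; simp

lemma aux_c2 (f : N →ₗ[k] k) (g : M →ₗ[k] P) :
    (TensorProduct.rid k P).toLinearMap ∘ₗ TensorProduct.map g f
      = g ∘ₗ (TensorProduct.rid k M).toLinearMap ∘ₗ lTensor M f := by
  apply TensorProduct.ext'; intro m n; simp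

lemma aux_c3 (f : N →ₗ[k] k) :
    (TensorProduct.lid k M).toLinearMap ∘ₗ rTensor M f ∘ₗ (TensorProduct.comm k M N).toLinearMap
      = (TensorProduct.rid k M).toLinearMap ∘ₗ lTensor M f := by
  apply TensorProduct.ext'; intro m n; simp

lemma aux_c4 : (TensorProduct.lid k M).toLinearMap ∘ₗ (TensorProduct.mk k k M) 1
    = LinearMap.id := by
  ext m; simp

lemma aux_c5 : (TensorProduct.rid k M).toLinearMap ∘ₗ (TensorProduct.mk k M k).flip 1
    = LinearMap.id := by
  ext m; simp

lemma aux_c6 : (TensorProduct.comm k N M).toLinearMap ∘ₗ (TensorProduct.comm k M N).toLinearMap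
    = LinearMap.id := by
  apply TensorProduct.ext'; intro m n; simp

lemma aux_assoc_id :
    (TensorProduct.assoc k M N P).symm.toLinearMap ∘ₗ (TensorProduct.assoc k M N P).toLinearMap
      = LinearMap.id := by
  apply TensorProduct.ext_threefold; intros; simp

end Aux

section Aux2
open LinearMap
variable {k : Type*} [CommRing k]
variable {M N A B E P Q R V W : Type*}
  [AddCommGroup M] [Module k M] [AddCommGroup N] [Module k N]
  [AddCommGroup A] [Module k A] [AddCommGroup B] [Module k B]
  [AddCommGroup E] [Module k E] [AddCommGroup P] [Module k P]
  [AddCommGroup Q] [Module k Q] [AddCommGroup R] [Module k R]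
  [AddCommGroup V] [Module k V] [AddCommGroup W] [Module k W]

lemma aux_rT (f : A →ₗ[k] P) (a : M →ₗ[k] A) (b : N →ₗ[k] B) (s : V →ₗ[k] M ⊗[k] N) :
    rTensor B f ∘ₗ (TensorProduct.map a b ∘ₗ s) = TensorProduct.map (f ∘ₗ a) b ∘ₗ s := by
  calc rTensor B f ∘ₗ (TensorProduct.map a b ∘ₗ s)
      = (rTensor B f ∘ₗ TensorProduct.map a b) ∘ₗ s := rfl
    _ = _ := by rw [rTensor_comp_map]

lemma aux_lT (f : B →ₗ[k] P) (a : M →ₗ[k] A) (b : N →ₗ[k] B) (s : V →ₗ[k] M ⊗[k] N) :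
    lTensor A f ∘ₗ (TensorProduct.map a b ∘ₗ s) = TensorProduct.map a (f ∘ₗ b) ∘ₗ s := by
  calc lTensor A f ∘ₗ (TensorProduct.map a b ∘ₗ s)
      = (lTensor A f ∘ₗ TensorProduct.map a b) ∘ₗ s := rfl
    _ = _ := by rw [lTensor_comp_map]

lemma aux_L (a : A →ₗ[k] P) (b : B →ₗ[k] Q) (c : E →ₗ[k] R) (t : V →ₗ[k] A ⊗[k] B)
    (s : W →ₗ[k] V ⊗[k] E) :
    (TensorProduct.assoc k P Q R).toLinearMap ∘ₗ
        (TensorProduct.map (TensorProduct.map a b ∘ₗ t) c ∘ₗ s)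
      = TensorProduct.map a (TensorProduct.map b c) ∘ₗ
          ((TensorProduct.assoc k A B E).toLinearMap ∘ₗ (rTensor E t ∘ₗ s)) := by
  calc (TensorProduct.assoc k P Q R).toLinearMap ∘ₗ
        (TensorProduct.map (TensorProduct.map a b ∘ₗ t) c ∘ₗ s)
      = (TensorProduct.assoc k P Q R).toLinearMap ∘ₗ
          ((TensorProduct.map (TensorProduct.map a b) c ∘ₗ rTensor E t) ∘ₗ s) := by
        rw [LinearMap.map_comp_rTensor]
    _ = ((TensorProduct.assoc k P Q R).toLinearMap ∘ₗ
          TensorProduct.map (TensorProduct.map a b) c) ∘ₗ (rTensor E t ∘ₗ s) := rfl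
    _ = (TensorProduct.map a (TensorProduct.map b c) ∘ₗ
          (TensorProduct.assoc k A B E).toLinearMap) ∘ₗ (rTensor E t ∘ₗ s) := by
        rw [← TensorProduct.map_map_comp_assoc_eq]
    _ = _ := rfl

lemma aux_R (a : M →ₗ[k] P) (g : A →ₗ[k] Q) (t : V →ₗ[k] A) (s : W →ₗ[k] M ⊗[k] V) :
    TensorProduct.map a (g ∘ₗ t) ∘ₗ s = TensorProduct.map a g ∘ₗ (lTensor M t ∘ₗ s) := by
  calc TensorProduct.map a (g ∘ₗ t) ∘ₗ s
      = (TensorProduct.map a g ∘ₗ lTensor M t) ∘ₗ s := by rw [LinearMap.map_comp_lTensor]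
    _ = _ := rfl

lemma aux_comm' (f : N →ₗ[k] Q) (g : M →ₗ[k] P) (s : V →ₗ[k] M ⊗[k] N) :
    (TensorProduct.comm k P Q).toLinearMap ∘ₗ (TensorProduct.map g f ∘ₗ s)
      = TensorProduct.map f g ∘ₗ ((TensorProduct.comm k M N).toLinearMap ∘ₗ s) := by
  calc (TensorProduct.comm k P Q).toLinearMap ∘ₗ (TensorProduct.map g f ∘ₗ s)
      = ((TensorProduct.comm k P Q).toLinearMap ∘ₗ TensorProduct.map g f) ∘ₗ s := rfl
    _ = (TensorProduct.map f g ∘ₗ (TensorProduct.comm k M N).toLinearMap) ∘ₗ s := by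
        rw [← TensorProduct.map_comp_comm_eq]
    _ = _ := rfl

lemma aux_c6' (s : V →ₗ[k] M ⊗[k] N) :
    (TensorProduct.comm k N M).toLinearMap ∘ₗ ((TensorProduct.comm k M N).toLinearMap ∘ₗ s)
      = s := by
  calc (TensorProduct.comm k N M).toLinearMap ∘ₗ ((TensorProduct.comm k M N).toLinearMap ∘ₗ s)
      = ((TensorProduct.comm k N M).toLinearMap ∘ₗ (TensorProduct.comm k M N).toLinearMap) ∘ₗ s :=
        rfl
    _ = _ := by rw [aux_c6, LinearMap.id_comp]

lemma aux_c1' (f : M →ₗ[k] k) (g : N →ₗ[k] P) (s : V →ₗ[k] M ⊗[k] N) :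
    (TensorProduct.lid k P).toLinearMap ∘ₗ (TensorProduct.map f g ∘ₗ s)
      = g ∘ₗ ((TensorProduct.lid k N).toLinearMap ∘ₗ (rTensor N f ∘ₗ s)) := by
  calc (TensorProduct.lid k P).toLinearMap ∘ₗ (TensorProduct.map f g ∘ₗ s)
      = ((TensorProduct.lid k P).toLinearMap ∘ₗ TensorProduct.map f g) ∘ₗ s := rfl
    _ = (g ∘ₗ (TensorProduct.lid k N).toLinearMap ∘ₗ rTensor N f) ∘ₗ s := by rw [aux_c1]
    _ = _ := rfl

lemma aux_c2' (f : N →ₗ[k] k) (g : M →ₗ[k] P) (s : V →ₗ[k] M ⊗[k] N) :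
    (TensorProduct.rid k P).toLinearMap ∘ₗ (TensorProduct.map g f ∘ₗ s)
      = g ∘ₗ ((TensorProduct.rid k M).toLinearMap ∘ₗ (lTensor M f ∘ₗ s)) := by
  calc (TensorProduct.rid k P).toLinearMap ∘ₗ (TensorProduct.map g f ∘ₗ s)
      = ((TensorProduct.rid k P).toLinearMap ∘ₗ TensorProduct.map g f) ∘ₗ s := rfl
    _ = (g ∘ₗ (TensorProduct.rid k M).toLinearMap ∘ₗ lTensor M f) ∘ₗ s := by rw [aux_c2]
    _ = _ := rfl

lemma aux_c3' (f : N →ₗ[k] k) (s : V →ₗ[k] M ⊗[k] N) :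
    (TensorProduct.lid k M).toLinearMap ∘ₗ
        (rTensor M f ∘ₗ ((TensorProduct.comm k M N).toLinearMap ∘ₗ s))
      = (TensorProduct.rid k M).toLinearMap ∘ₗ (lTensor M f ∘ₗ s) := by
  calc (TensorProduct.lid k M).toLinearMap ∘ₗ
        (rTensor M f ∘ₗ ((TensorProduct.comm k M N).toLinearMap ∘ₗ s))
      = ((TensorProduct.lid k M).toLinearMap ∘ₗ rTensor M f ∘ₗ
          (TensorProduct.comm k M N).toLinearMap) ∘ₗ s := rfl
    _ = ((TensorProduct.rid k M).toLinearMap ∘ₗ lTensor M f) ∘ₗ s := by rw [aux_c3]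
    _ = _ := rfl

end Aux2

/-- Given a cocommutative coalgebra `C`, a symmetric `C`-bicomodule `X`
(presented by a right coaction `ρ`, the left coaction being `τ ∘ ρ`), and a symmetric
normalized 2-cocycle `ω : X → C ⊗ C`, the direct sum `C̃ = C ⊕ X` with the comultiplication
`Δ_{C̃}(c,x) = Σ(c₁,0)⊗(c₂,0) + Σ(x₍1₎,0)⊗(0,x₍0₎) + Σ(0,x₍0₎)⊗(x₍1₎,0) + Σ(ω₁x,0)⊗(ω₂x,0)`
and counit `ε(c,x) = ε_C(c)` is a coassociative, counital, cocommutative coalgebra. -/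
theorem extension_coalgebra_structure {k : Type*} [Field k] {C X : Type*}
    [AddCommGroup C] [Module k C] [Coalgebra k C]
    [AddCommGroup X] [Module k X]
    (hcocomm : (TensorProduct.comm k C C).toLinearMap ∘ₗ
      (Coalgebra.comul : C →ₗ[k] C ⊗[k] C) = Coalgebra.comul)
    (ρ : X →ₗ[k] X ⊗[k] C)
    (hcoassoc : (TensorProduct.assoc k X C C).toLinearMap ∘ₗ LinearMap.rTensor C ρ ∘ₗ ρ =
      LinearMap.lTensor X (Coalgebra.comul : C →ₗ[k] C ⊗[k] C) ∘ₗ ρ)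
    (hcounit : (TensorProduct.rid k X).toLinearMap ∘ₗ
      LinearMap.lTensor X (Coalgebra.counit : C →ₗ[k] k) ∘ₗ ρ = LinearMap.id)
    (ω : X →ₗ[k] C ⊗[k] C)
    (hsymm : (TensorProduct.comm k C C).toLinearMap ∘ₗ ω = ω)
    (hnorm₁ : (TensorProduct.lid k C).toLinearMap ∘ₗ
      LinearMap.rTensor C (Coalgebra.counit : C →ₗ[k] k) ∘ₗ ω = 0)
    (hnorm₂ : (TensorProduct.rid k C).toLinearMap ∘ₗ
      LinearMap.lTensor C (Coalgebra.counit : C →ₗ[k] k) ∘ₗ ω = 0)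
    (hcocycle : LinearMap.lTensor C ω ∘ₗ ((TensorProduct.comm k X C).toLinearMap ∘ₗ ρ)
      - (TensorProduct.assoc k C C C).toLinearMap ∘ₗ
          LinearMap.rTensor C (Coalgebra.comul : C →ₗ[k] C ⊗[k] C) ∘ₗ ω
      + LinearMap.lTensor C (Coalgebra.comul : C →ₗ[k] C ⊗[k] C) ∘ₗ ω
      - (TensorProduct.assoc k C C C).toLinearMap ∘ₗ LinearMap.rTensor C ω ∘ₗ ρ = 0) :
    -- coassociativity of the extension comultiplication
    (TensorProduct.assoc k (C × X) (C × X) (C × X)).toLinearMap ∘ₗ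
        LinearMap.rTensor (C × X) (extComul ρ ω) ∘ₗ extComul ρ ω =
      LinearMap.lTensor (C × X) (extComul ρ ω) ∘ₗ extComul ρ ω ∧
    -- left counit law
    (TensorProduct.lid k (C × X)).toLinearMap ∘ₗ
        LinearMap.rTensor (C × X) (extCounit (k := k) (C := C) (X := X)) ∘ₗ extComul ρ ω =
      LinearMap.id ∧
    -- right counit law
    (TensorProduct.rid k (C × X)).toLinearMap ∘ₗ
        LinearMap.lTensor (C × X) (extCounit (k := k) (C := C) (X := X)) ∘ₗ extComul ρ ω =
      LinearMap.id ∧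
    -- cocommutativity
    (TensorProduct.comm k (C × X) (C × X)).toLinearMap ∘ₗ extComul ρ ω = extComul ρ ω := by
  open LinearMap in
  -- basic compositions with the two injections
  have hl : extComul ρ ω ∘ₗ LinearMap.inl k C X
      = TensorProduct.map (LinearMap.inl k C X) (LinearMap.inl k C X) ∘ₗ
        (Coalgebra.comul : C →ₗ[k] C ⊗[k] C) := by
    unfold extComul
    simp only [add_comp, comp_assoc, fst_comp_inl, snd_comp_inl, comp_zero, zero_comp,
      comp_id, add_zero]
  have hr : extComul ρ ω ∘ₗ LinearMap.inr k C X
      = TensorProduct.map (LinearMap.inl k C X) (LinearMap.inr k C X) ∘ₗ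
          ((TensorProduct.comm k X C).toLinearMap ∘ₗ ρ)
        + TensorProduct.map (LinearMap.inr k C X) (LinearMap.inl k C X) ∘ₗ ρ
        + TensorProduct.map (LinearMap.inl k C X) (LinearMap.inl k C X) ∘ₗ ω := by
    unfold extComul
    simp only [add_comp, comp_assoc, fst_comp_inr, snd_comp_inr, comp_zero, zero_comp,
      comp_id, zero_add]
  have hεl : extCounit (k := k) (C := C) (X := X) ∘ₗ LinearMap.inl k C X
      = (Coalgebra.counit : C →ₗ[k] k) := by
    unfold extCounit; simp only [comp_assoc, fst_comp_inl, comp_id]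
  have hεr : extCounit (k := k) (C := C) (X := X) ∘ₗ LinearMap.inr k C X = 0 := by
    unfold extCounit; simp only [comp_assoc, fst_comp_inr, comp_zero]
  -- key coaction identities
  have hA : (TensorProduct.assoc k C C X).toLinearMap ∘ₗ
        (LinearMap.rTensor X (Coalgebra.comul : C →ₗ[k] C ⊗[k] C) ∘ₗ
          ((TensorProduct.comm k X C).toLinearMap ∘ₗ ρ))
      = LinearMap.lTensor C ((TensorProduct.comm k X C).toLinearMap ∘ₗ ρ) ∘ₗ
          ((TensorProduct.comm k X C).toLinearMap ∘ₗ ρ) := by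
    have e1 : (TensorProduct.assoc k C C X).toLinearMap ∘ₗ
          (LinearMap.rTensor X (Coalgebra.comul : C →ₗ[k] C ⊗[k] C) ∘ₗ
            ((TensorProduct.comm k X C).toLinearMap ∘ₗ ρ))
        = ((TensorProduct.assoc k C C X).toLinearMap ∘ₗ
            (TensorProduct.comm k X (C ⊗[k] C)).toLinearMap ∘ₗ
            LinearMap.lTensor X (Coalgebra.comul : C →ₗ[k] C ⊗[k] C)) ∘ₗ ρ := by
      calc (TensorProduct.assoc k C C X).toLinearMap ∘ₗ
          (LinearMap.rTensor X (Coalgebra.comul : C →ₗ[k] C ⊗[k] C) ∘ₗ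
            ((TensorProduct.comm k X C).toLinearMap ∘ₗ ρ))
          = ((TensorProduct.assoc k C C X).toLinearMap ∘ₗ
              LinearMap.rTensor X (Coalgebra.comul : C →ₗ[k] C ⊗[k] C) ∘ₗ
              (TensorProduct.comm k X C).toLinearMap) ∘ₗ ρ := rfl
        _ = _ := by rw [aux_n1] <;> rfl
    have e2 : LinearMap.lTensor C ((TensorProduct.comm k X C).toLinearMap ∘ₗ ρ) ∘ₗ
          ((TensorProduct.comm k X C).toLinearMap ∘ₗ ρ)
        = ((TensorProduct.assoc k C C X).toLinearMap ∘ₗ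
            (TensorProduct.comm k X (C ⊗[k] C)).toLinearMap ∘ₗ
            LinearMap.lTensor X (Coalgebra.comul : C →ₗ[k] C ⊗[k] C)) ∘ₗ ρ := by
      calc LinearMap.lTensor C ((TensorProduct.comm k X C).toLinearMap ∘ₗ ρ) ∘ₗ
            ((TensorProduct.comm k X C).toLinearMap ∘ₗ ρ)
          = LinearMap.lTensor C (TensorProduct.comm k X C).toLinearMap ∘ₗ
              ((LinearMap.lTensor C ρ ∘ₗ (TensorProduct.comm k X C).toLinearMap) ∘ₗ ρ) := by
            rw [lTensor_comp] <;> rfl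
        _ = LinearMap.lTensor C (TensorProduct.comm k X C).toLinearMap ∘ₗ
              (((TensorProduct.comm k (X ⊗[k] C) C).toLinearMap ∘ₗ LinearMap.rTensor C ρ) ∘ₗ ρ) := by
            rw [aux_n2] <;> rfl <;> rfl
        _ = LinearMap.lTensor C (TensorProduct.comm k X C).toLinearMap ∘ₗ
              ((TensorProduct.comm k (X ⊗[k] C) C).toLinearMap ∘ₗ
                (LinearMap.id ∘ₗ (LinearMap.rTensor C ρ ∘ₗ ρ))) := by rw [id_comp] <;> rfl
        _ = LinearMap.lTensor C (TensorProduct.comm k X C).toLinearMap ∘ₗ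
              ((TensorProduct.comm k (X ⊗[k] C) C).toLinearMap ∘ₗ
                (((TensorProduct.assoc k X C C).symm.toLinearMap ∘ₗ
                  (TensorProduct.assoc k X C C).toLinearMap) ∘ₗ
                  (LinearMap.rTensor C ρ ∘ₗ ρ))) := by rw [aux_assoc_id] <;> rfl
        _ = (LinearMap.lTensor C (TensorProduct.comm k X C).toLinearMap ∘ₗ
              (TensorProduct.comm k (X ⊗[k] C) C).toLinearMap ∘ₗ
              (TensorProduct.assoc k X C C).symm.toLinearMap) ∘ₗ
              ((TensorProduct.assoc k X C C).toLinearMap ∘ₗ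
                LinearMap.rTensor C ρ ∘ₗ ρ) := rfl
        _ = (LinearMap.lTensor C (TensorProduct.comm k X C).toLinearMap ∘ₗ
              (TensorProduct.comm k (X ⊗[k] C) C).toLinearMap ∘ₗ
              (TensorProduct.assoc k X C C).symm.toLinearMap) ∘ₗ
              (LinearMap.lTensor X (Coalgebra.comul : C →ₗ[k] C ⊗[k] C) ∘ₗ ρ) := by
            rw [hcoassoc] <;> rfl
        _ = ((TensorProduct.assoc k C C X).toLinearMap ∘ₗ
              (TensorProduct.comm k X (C ⊗[k] C)).toLinearMap ∘ₗ
              LinearMap.lTensor X (TensorProduct.comm k C C).toLinearMap) ∘ₗ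
              (LinearMap.lTensor X (Coalgebra.comul : C →ₗ[k] C ⊗[k] C) ∘ₗ ρ) := by
            rw [aux_n3] <;> rfl
        _ = ((TensorProduct.assoc k C C X).toLinearMap ∘ₗ
              (TensorProduct.comm k X (C ⊗[k] C)).toLinearMap) ∘ₗ
              ((LinearMap.lTensor X (TensorProduct.comm k C C).toLinearMap ∘ₗ
                LinearMap.lTensor X (Coalgebra.comul : C →ₗ[k] C ⊗[k] C)) ∘ₗ ρ) := rfl
        _ = ((TensorProduct.assoc k C C X).toLinearMap ∘ₗ
              (TensorProduct.comm k X (C ⊗[k] C)).toLinearMap) ∘ₗ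
              (LinearMap.lTensor X ((TensorProduct.comm k C C).toLinearMap ∘ₗ
                (Coalgebra.comul : C →ₗ[k] C ⊗[k] C)) ∘ₗ ρ) := by rw [← lTensor_comp] <;> rfl
        _ = _ := by rw [hcocomm] <;> rfl
    rw [e1, e2]
  have hB : (TensorProduct.assoc k C X C).toLinearMap ∘ₗ
        (LinearMap.rTensor C ((TensorProduct.comm k X C).toLinearMap ∘ₗ ρ) ∘ₗ ρ)
      = LinearMap.lTensor C ρ ∘ₗ ((TensorProduct.comm k X C).toLinearMap ∘ₗ ρ) := by
    have e1 : (TensorProduct.assoc k C X C).toLinearMap ∘ₗ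
          (LinearMap.rTensor C ((TensorProduct.comm k X C).toLinearMap ∘ₗ ρ) ∘ₗ ρ)
        = ((TensorProduct.assoc k C X C).toLinearMap ∘ₗ
            LinearMap.rTensor C (TensorProduct.comm k X C).toLinearMap ∘ₗ
            (TensorProduct.assoc k X C C).symm.toLinearMap) ∘ₗ
            (LinearMap.lTensor X (Coalgebra.comul : C →ₗ[k] C ⊗[k] C) ∘ₗ ρ) := by
      calc (TensorProduct.assoc k C X C).toLinearMap ∘ₗ
            (LinearMap.rTensor C ((TensorProduct.comm k X C).toLinearMap ∘ₗ ρ) ∘ₗ ρ)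
          = (TensorProduct.assoc k C X C).toLinearMap ∘ₗ
              ((LinearMap.rTensor C (TensorProduct.comm k X C).toLinearMap ∘ₗ
                LinearMap.rTensor C ρ) ∘ₗ ρ) := by rw [rTensor_comp] <;> rfl
        _ = (TensorProduct.assoc k C X C).toLinearMap ∘ₗ
              (LinearMap.rTensor C (TensorProduct.comm k X C).toLinearMap ∘ₗ
                (LinearMap.id ∘ₗ (LinearMap.rTensor C ρ ∘ₗ ρ))) := by rw [id_comp] <;> rfl
        _ = (TensorProduct.assoc k C X C).toLinearMap ∘ₗ
              (LinearMap.rTensor C (TensorProduct.comm k X C).toLinearMap ∘ₗ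
                (((TensorProduct.assoc k X C C).symm.toLinearMap ∘ₗ
                  (TensorProduct.assoc k X C C).toLinearMap) ∘ₗ
                  (LinearMap.rTensor C ρ ∘ₗ ρ))) := by rw [aux_assoc_id] <;> rfl
        _ = ((TensorProduct.assoc k C X C).toLinearMap ∘ₗ
              LinearMap.rTensor C (TensorProduct.comm k X C).toLinearMap ∘ₗ
              (TensorProduct.assoc k X C C).symm.toLinearMap) ∘ₗ
              ((TensorProduct.assoc k X C C).toLinearMap ∘ₗ
                LinearMap.rTensor C ρ ∘ₗ ρ) := rfl
        _ = _ := by rw [hcoassoc] <;> rfl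
    have e2 : LinearMap.lTensor C ρ ∘ₗ ((TensorProduct.comm k X C).toLinearMap ∘ₗ ρ)
        = ((TensorProduct.assoc k C X C).toLinearMap ∘ₗ
            LinearMap.rTensor C (TensorProduct.comm k X C).toLinearMap ∘ₗ
            (TensorProduct.assoc k X C C).symm.toLinearMap) ∘ₗ
            (LinearMap.lTensor X (Coalgebra.comul : C →ₗ[k] C ⊗[k] C) ∘ₗ ρ) := by
      calc LinearMap.lTensor C ρ ∘ₗ ((TensorProduct.comm k X C).toLinearMap ∘ₗ ρ)
          = ((LinearMap.lTensor C ρ ∘ₗ (TensorProduct.comm k X C).toLinearMap) ∘ₗ ρ) := rfl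
        _ = ((TensorProduct.comm k (X ⊗[k] C) C).toLinearMap ∘ₗ LinearMap.rTensor C ρ) ∘ₗ ρ := by
            rw [aux_n2] <;> rfl
        _ = (TensorProduct.comm k (X ⊗[k] C) C).toLinearMap ∘ₗ LinearMap.rTensor C ρ ∘ₗ ρ := rfl
        _ = (TensorProduct.comm k (X ⊗[k] C) C).toLinearMap ∘ₗ
              (LinearMap.id ∘ₗ (LinearMap.rTensor C ρ ∘ₗ ρ)) := by rw [id_comp] <;> rfl
        _ = (TensorProduct.comm k (X ⊗[k] C) C).toLinearMap ∘ₗ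
              (((TensorProduct.assoc k X C C).symm.toLinearMap ∘ₗ
                (TensorProduct.assoc k X C C).toLinearMap) ∘ₗ
                (LinearMap.rTensor C ρ ∘ₗ ρ)) := by rw [aux_assoc_id] <;> rfl
        _ = ((TensorProduct.comm k (X ⊗[k] C) C).toLinearMap ∘ₗ
              (TensorProduct.assoc k X C C).symm.toLinearMap) ∘ₗ
              ((TensorProduct.assoc k X C C).toLinearMap ∘ₗ
                LinearMap.rTensor C ρ ∘ₗ ρ) := rfl
        _ = ((TensorProduct.comm k (X ⊗[k] C) C).toLinearMap ∘ₗ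
              (TensorProduct.assoc k X C C).symm.toLinearMap) ∘ₗ
              (LinearMap.lTensor X (Coalgebra.comul : C →ₗ[k] C ⊗[k] C) ∘ₗ ρ) := by
            rw [hcoassoc] <;> rfl
        _ = ((TensorProduct.assoc k C X C).toLinearMap ∘ₗ
              LinearMap.rTensor C (TensorProduct.comm k X C).toLinearMap ∘ₗ
              (TensorProduct.assoc k X C C).symm.toLinearMap ∘ₗ
              LinearMap.lTensor X (TensorProduct.comm k C C).toLinearMap) ∘ₗ
              (LinearMap.lTensor X (Coalgebra.comul : C →ₗ[k] C ⊗[k] C) ∘ₗ ρ) := by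
            rw [aux_n4] <;> rfl
        _ = ((TensorProduct.assoc k C X C).toLinearMap ∘ₗ
              LinearMap.rTensor C (TensorProduct.comm k X C).toLinearMap ∘ₗ
              (TensorProduct.assoc k X C C).symm.toLinearMap) ∘ₗ
              ((LinearMap.lTensor X (TensorProduct.comm k C C).toLinearMap ∘ₗ
                LinearMap.lTensor X (Coalgebra.comul : C →ₗ[k] C ⊗[k] C)) ∘ₗ ρ) := rfl
        _ = ((TensorProduct.assoc k C X C).toLinearMap ∘ₗ
              LinearMap.rTensor C (TensorProduct.comm k X C).toLinearMap ∘ₗ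
              (TensorProduct.assoc k X C C).symm.toLinearMap) ∘ₗ
              (LinearMap.lTensor X ((TensorProduct.comm k C C).toLinearMap ∘ₗ
                (Coalgebra.comul : C →ₗ[k] C ⊗[k] C)) ∘ₗ ρ) := by rw [← lTensor_comp] <;> rfl
        _ = _ := by rw [hcocomm] <;> rfl
    rw [e1, e2]
  have hD1 : (TensorProduct.assoc k C C C).toLinearMap ∘ₗ (LinearMap.rTensor C ω ∘ₗ ρ)
      = LinearMap.lTensor C ω ∘ₗ ((TensorProduct.comm k X C).toLinearMap ∘ₗ ρ)
        + LinearMap.lTensor C (Coalgebra.comul : C →ₗ[k] C ⊗[k] C) ∘ₗ ω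
        - (TensorProduct.assoc k C C C).toLinearMap ∘ₗ
            (LinearMap.rTensor C (Coalgebra.comul : C →ₗ[k] C ⊗[k] C) ∘ₗ ω) := by
    rw [← sub_eq_zero]
    have h2 : (TensorProduct.assoc k C C C).toLinearMap ∘ₗ (LinearMap.rTensor C ω ∘ₗ ρ)
        - (LinearMap.lTensor C ω ∘ₗ ((TensorProduct.comm k X C).toLinearMap ∘ₗ ρ)
          + LinearMap.lTensor C (Coalgebra.comul : C →ₗ[k] C ⊗[k] C) ∘ₗ ω
          - (TensorProduct.assoc k C C C).toLinearMap ∘ₗ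
              (LinearMap.rTensor C (Coalgebra.comul : C →ₗ[k] C ⊗[k] C) ∘ₗ ω))
        = -(LinearMap.lTensor C ω ∘ₗ ((TensorProduct.comm k X C).toLinearMap ∘ₗ ρ)
          - (TensorProduct.assoc k C C C).toLinearMap ∘ₗ
              LinearMap.rTensor C (Coalgebra.comul : C →ₗ[k] C ⊗[k] C) ∘ₗ ω
          + LinearMap.lTensor C (Coalgebra.comul : C →ₗ[k] C ⊗[k] C) ∘ₗ ω
          - (TensorProduct.assoc k C C C).toLinearMap ∘ₗ LinearMap.rTensor C ω ∘ₗ ρ) := by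
      abel
    rw [h2]
    exact neg_eq_zero.mpr hcocycle
  refine ⟨?_, ?_, ?_, ?_⟩
  · -- coassociativity
    apply LinearMap.prod_ext
    · simp only [comp_assoc]
      rw [hl]
      simp only [comp_add, aux_rT, aux_lT]
      rw [hl]
      simp only [aux_L, aux_R]
      rw [Coalgebra.coassoc]
    · simp only [comp_assoc]
      rw [hr]
      simp only [comp_add, aux_rT, aux_lT]
      rw [hl, hr]
      simp only [TensorProduct.map_add_left, TensorProduct.map_add_right, add_comp, comp_add,
        aux_L, aux_R]
      rw [hA, hB, hcoassoc, hD1]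
      ext x
      simp only [LinearMap.add_apply, LinearMap.sub_apply, LinearMap.comp_apply, map_add, map_sub]
      abel
  · -- left counit
    apply LinearMap.prod_ext
    · simp only [comp_assoc]
      rw [hl]
      simp only [aux_rT]
      rw [hεl]
      rw [aux_c1', Coalgebra.rTensor_counit_comp_comul, aux_c4]
      simp only [comp_id, id_comp]
    · simp only [comp_assoc]
      rw [hr]
      simp only [comp_add, aux_rT]
      rw [hεl, hεr]
      simp only [TensorProduct.map_zero_left, zero_comp, comp_zero, add_zero, zero_add]
      rw [aux_c1', aux_c1', aux_c3', hcounit, hnorm₁]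
      simp only [comp_zero, add_zero, comp_id, id_comp]
  · -- right counit
    apply LinearMap.prod_ext
    · simp only [comp_assoc]
      rw [hl]
      simp only [aux_lT]
      rw [hεl]
      rw [aux_c2', Coalgebra.lTensor_counit_comp_comul, aux_c5]
      simp only [comp_id, id_comp]
    · simp only [comp_assoc]
      rw [hr]
      simp only [comp_add, aux_lT]
      rw [hεl, hεr]
      simp only [TensorProduct.map_zero_right, zero_comp, comp_zero, add_zero, zero_add]
      rw [aux_c2', aux_c2', hcounit, hnorm₂]
      simp only [comp_zero, add_zero, comp_id, id_comp]
  · -- cocommutativity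
    apply LinearMap.prod_ext
    · simp only [comp_assoc]
      rw [hl, aux_comm', hcocomm]
    · simp only [comp_assoc]
      rw [hr]
      simp only [comp_add, aux_comm']
      rw [aux_c6', hsymm]
      abel
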